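/- Let V_𝔪 be a free rank-2 module over a ℤ_ℓ-algebra 𝕋_𝔪 which is a local complete Noetherian ring with Hom_{ℤ_ℓ}(𝕋_𝔪, ℤ_ℓ) free of rank 1 over 𝕋_𝔪 (Gorenstein). Given a group G acting 𝕋_𝔪-linearly on V_𝔪 with determinant character χ, the twisted dual V_𝔪* = Hom_{ℤ_ℓ}(V_𝔪, ℤ_ℓ) with G-action (g·φ)(x) = χ(g)·φ(g⁻¹x) is isomorphic to V_𝔪 as a 𝕋_𝔪[G]-module. -/

import Mathlib

namespace Stmt18

/-- Let `𝕋` be a `ℤ_ℓ`-algebra which is a local complete Noetherian ring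
with `Hom_{ℤ_ℓ}(𝕋, ℤ_ℓ)` free of rank `1` over `𝕋` (Gorenstein; phrased here as the
existence of a generator `λ`, every `ℤ_ℓ`-functional on `𝕋` being uniquely `λ(t·–)`),
and let `V_𝔪` be a free rank-2 `𝕋`-module with a `𝕋`-linear action `ρ` of a group `G`
of determinant character `χ` (valued in `ℤ_ℓˣ`).  Then the twisted dual
`V_𝔪* = Hom_{ℤ_ℓ}(V_𝔪, ℤ_ℓ)`, with `G`-action `(g·φ)(x) = χ(g)·φ(g⁻¹x)` and `𝕋`-action
`(t·φ)(x) = φ(t·x)`, is isomorphic to `V_𝔪` as a `𝕋[G]`-module. -/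
theorem stmt_18 (ℓ : ℕ) [Fact ℓ.Prime]
    (𝕋 : Type*) [CommRing 𝕋] [Algebra ℤ_[ℓ] 𝕋]
    [IsLocalRing 𝕋] [IsNoetherianRing 𝕋]
    (hcomplete : IsAdicComplete (IsLocalRing.maximalIdeal 𝕋) 𝕋)
    (V : Type*) [AddCommGroup V] [Module 𝕋 V] [Module ℤ_[ℓ] V] [IsScalarTower ℤ_[ℓ] 𝕋 V]
    [Module.Free 𝕋 V] (hrank : Module.finrank 𝕋 V = 2)
    (hGorenstein : ∃ lam : 𝕋 →ₗ[ℤ_[ℓ]] ℤ_[ℓ],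
      ∀ φ : 𝕋 →ₗ[ℤ_[ℓ]] ℤ_[ℓ], ∃! t : 𝕋, ∀ x : 𝕋, φ x = lam (t * x))
    (G : Type*) [Group G] (ρ : Representation 𝕋 G V) (χ : G →* ℤ_[ℓ]ˣ)
    (hdet : ∀ g : G, LinearMap.det (ρ g) = algebraMap ℤ_[ℓ] 𝕋 (χ g)) :
    ∃ F : V ≃+ (V →ₗ[ℤ_[ℓ]] ℤ_[ℓ]),
      (∀ (t : 𝕋) (v x : V), F (t • v) x = F v (t • x)) ∧
      (∀ (g : G) (v x : V), F (ρ g v) x = (χ g : ℤ_[ℓ]) * F v (ρ g⁻¹ x)) := by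
  obtain ⟨lam, hlam⟩ := hGorenstein
  have : Module.Finite 𝕋 V := Module.finite_of_finrank_eq_succ hrank
  let b : Module.Basis (Fin 2) 𝕋 V := Module.finBasisOfFinrankEq 𝕋 V hrank
  -- the determinant pairing
  set D : V → V → 𝕋 := fun v x => b.repr v 0 * b.repr x 1 - b.repr v 1 * b.repr x 0 with hD
  have hsmul : ∀ (c : ℤ_[ℓ]) (x : V) (i : Fin 2),
      b.repr (c • x) i = algebraMap ℤ_[ℓ] 𝕋 c * b.repr x i := by
    intro c x i
    rw [← algebraMap_smul 𝕋 c x, map_smul]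
    simp [Algebra.smul_def]
  have hTsmul : ∀ (t : 𝕋) (x : V) (i : Fin 2), b.repr (t • x) i = t * b.repr x i := by
    intro t x i; rw [map_smul]; simp
  have hDadd₂ : ∀ v x y, D v (x + y) = D v x + D v y := by
    intro v x y; simp only [hD, map_add, Finsupp.add_apply]; ring
  have hDadd₁ : ∀ v w x, D (v + w) x = D v x + D w x := by
    intro v w x; simp only [hD, map_add, Finsupp.add_apply]; ring
  -- equivariance of D
  have hDG : ∀ (g : G) (v x : V),
      D (ρ g v) (ρ g x) = algebraMap ℤ_[ℓ] 𝕋 (χ g) * D v x := by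
    intro g v x
    set M := LinearMap.toMatrix b b (ρ g) with hM
    have hrep : ∀ w : V, ∀ i, b.repr (ρ g w) i = M.mulVec (b.repr w) i := by
      intro w i
      rw [hM, LinearMap.toMatrix_mulVec_repr]
    have hdet' : M 0 0 * M 1 1 - M 0 1 * M 1 0 = algebraMap ℤ_[ℓ] 𝕋 (χ g) := by
      have h2 := LinearMap.det_toMatrix b (ρ g)
      rw [Matrix.det_fin_two] at h2
      rw [← hM] at h2
      rw [h2, hdet g]
    simp only [hD, hrep, Matrix.mulVec, dotProduct, Fin.sum_univ_two]
    rw [← hdet']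
    ring
  -- the additive map v ↦ (x ↦ lam (D v x))
  let F₀ : V →+ (V →ₗ[ℤ_[ℓ]] ℤ_[ℓ]) :=
    { toFun := fun v =>
        { toFun := fun x => lam (D v x)
          map_add' := by
            intro x y
            show lam (D v (x + y)) = lam (D v x) + lam (D v y)
            rw [hDadd₂, map_add]
          map_smul' := by
            intro c x
            have h : D v (c • x) = c • D v x := by
              simp only [hD, hsmul, Algebra.smul_def]; ring
            show lam (D v (c • x)) = (RingHom.id ℤ_[ℓ]) c • lam (D v x)
            rw [h, map_smul, RingHom.id_apply] }
      map_zero' := by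
        ext x; simp [hD]
      map_add' := by
        intro v w; ext x; simp [hDadd₁] }
  have hF₀ : ∀ v x, F₀ v x = lam (D v x) := fun v x => rfl
  -- injectivity
  have hinj : Function.Injective F₀ := by
    intro v w hvw
    have hz : ∀ x, lam (D (v - w) x) = 0 := by
      intro x
      have h2 : F₀ (v - w) = 0 := by rw [map_sub, hvw, sub_self]
      calc lam (D (v - w) x) = F₀ (v - w) x := (hF₀ _ _).symm
        _ = 0 := by rw [h2]; rfl
    -- reduce to showing v - w = 0
    rw [← sub_eq_zero]
    set u := v - w with hu
    -- uniqueness for the zero functional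
    have hzero := hlam 0
    obtain ⟨t₀, ht₀, huniq⟩ := hzero
    have hzero0 : (∀ x : 𝕋, (0 : 𝕋 →ₗ[ℤ_[ℓ]] ℤ_[ℓ]) x = lam ((0:𝕋) * x)) := by
      intro x; simp
    have key : ∀ s : 𝕋, (∀ x : 𝕋, lam (s * x) = 0) → s = 0 := by
      intro s hs
      have h1 : s = t₀ := huniq s (by intro x; simp [hs x])
      have h2 : (0 : 𝕋) = t₀ := huniq 0 hzero0
      rw [h1, ← h2]
    have h0 : b.repr u 0 = 0 := by
      apply key
      intro t
      have := hz (t • b 1)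
      simpa [hD, hTsmul, Finsupp.single_apply] using this
    have h1 : b.repr u 1 = 0 := by
      apply key
      intro t
      have := hz (t • b 0)
      have h' : lam (-(b.repr u 1 * t)) = 0 := by
        simpa [hD, hTsmul, Finsupp.single_apply] using this
      rw [map_neg, neg_eq_zero] at h'
      exact h'
    have : b.repr u = 0 := by
      ext i
      fin_cases i
      · exact h0
      · exact h1
    simpa using b.repr.injective (by simpa using this)
  -- surjectivity
  have hsurj : Function.Surjective F₀ := by
    intro φ
    have mk : ∀ i : Fin 2, ∃ t : 𝕋, ∀ s : 𝕋, φ (s • b i) = lam (t * s) := by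
      intro i
      obtain ⟨t, ht, -⟩ := hlam
        { toFun := fun s => φ (s • b i)
          map_add' := by
            intro s₁ s₂
            show φ ((s₁ + s₂) • b i) = φ (s₁ • b i) + φ (s₂ • b i)
            rw [add_smul, map_add]
          map_smul' := by
            intro c s
            show φ ((c • s) • b i) = (RingHom.id ℤ_[ℓ]) c • φ (s • b i)
            rw [smul_assoc, map_smul, RingHom.id_apply] }
      exact ⟨t, ht⟩
    obtain ⟨t0, ht0⟩ := mk 0
    obtain ⟨t1, ht1⟩ := mk 1
    refine ⟨t1 • b 0 + (-t0) • b 1, ?_⟩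
    ext x
    have hx : x = b.repr x 0 • b 0 + b.repr x 1 • b 1 := by
      have := b.sum_repr x
      rw [Fin.sum_univ_two] at this
      exact this.symm
    rw [hF₀]
    have hDv : D (t1 • b 0 + (-t0) • b 1) x = t0 * b.repr x 0 + t1 * b.repr x 1 := by
      simp only [hD, map_add, Finsupp.add_apply, hTsmul]
      simp [Finsupp.single_apply]
      ring
    rw [hDv, map_add, ← ht0, ← ht1]
    conv_rhs => rw [hx]
    rw [map_add]
  let F : V ≃+ (V →ₗ[ℤ_[ℓ]] ℤ_[ℓ]) := AddEquiv.ofBijective F₀ ⟨hinj, hsurj⟩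
  have hF : ∀ v x, F v x = lam (D v x) := fun v x => rfl
  refine ⟨F, ?_, ?_⟩
  · intro t v x
    rw [hF, hF]
    congr 1
    simp only [hD, hTsmul]
    ring
  · intro g v x
    rw [hF, hF]
    have hgx : ρ g (ρ g⁻¹ x) = x := by
      rw [← Module.End.mul_apply, ← map_mul, mul_inv_cancel, map_one, Module.End.one_apply]
    calc lam (D (ρ g v) x) = lam (D (ρ g v) (ρ g (ρ g⁻¹ x))) := by rw [hgx]
      _ = lam (algebraMap ℤ_[ℓ] 𝕋 (χ g) * D v (ρ g⁻¹ x)) := by rw [hDG]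
      _ = (χ g : ℤ_[ℓ]) * lam (D v (ρ g⁻¹ x)) := by
          rw [← Algebra.smul_def, map_smul, smul_eq_mul]

end Stmt18
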